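/- Let n₁ = sN₁ and n₂ = sN₂ with s = 2ℓ−1 odd. If G̃(x,y) = Σ_{u,v} g̃(x_u^{n₁}, y_v^{n₂}) Φ_{m₁,u}^{n₁}(x) Φ_{m₂,v}^{n₂}(y) is the bivariate VP interpolant of g̃ at the n₁×n₂ Chebyshev grid, then its values at the coarser N₁×N₂ Chebyshev grid equal the original samples: G̃(x_{h₁}^{N₁}, y_{h₂}^{N₂}) = g̃(x_{i(h₁)}^{n₁}, x_{i(h₂)}^{n₂}) with i(h) = (s(2h−1)+1)/2, for all h₁ = 1,…,N₁ and h₂ = 1,…,N₂. In particular the downscaled output is independent of the VP parameters m₁, m₂. -/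

import Mathlib

open Real Finset



/-- Chebyshev node angle `t_k^n = (2k-1)π/(2n)`. -/
noncomputable def tnode (n k : ℕ) : ℝ := (2 * (k : ℝ) - 1) * Real.pi / (2 * n)

/-- Chebyshev node `x_k^n = cos t_k^n`. -/
noncomputable def xnode (n k : ℕ) : ℝ := Real.cos (tnode n k)

/-- Orthogonal VP polynomial `q_{m,r}^n`, as a function of `ξ = cos t`. -/
noncomputable def qVP (n m r : ℕ) (ξ : ℝ) : ℝ :=
  if r ≤ n - m then Real.cos (r * Real.arccos ξ)
  else ((n : ℝ) + m - r) / (2 * m) * Real.cos (r * Real.arccos ξ)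
      + ((n : ℝ) - m - r) / (2 * m) * Real.cos ((2 * (n : ℝ) - r) * Real.arccos ξ)

/-- Fundamental VP polynomial `Φ_{m,k}^n`, as a function of `ξ = cos t`. -/
noncomputable def phiVP (n m k : ℕ) (ξ : ℝ) : ℝ :=
  2 / (n : ℝ) * (1 / 2 + ∑ r ∈ Finset.Icc 1 (n - 1),
    Real.cos (r * tnode n k) * qVP n m r ξ)

/-- Bivariate VP interpolant of `g̃` at the `n₁ × n₂` Chebyshev grid. -/
noncomputable def VPop (n₁ n₂ m₁ m₂ : ℕ) (g : ℝ → ℝ → ℝ) (x y : ℝ) : ℝ :=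
  ∑ u ∈ Finset.Icc 1 n₁, ∑ v ∈ Finset.Icc 1 n₂,
    g (xnode n₁ u) (xnode n₂ v) * phiVP n₁ m₁ u x * phiVP n₂ m₂ v y

/-- Index map `i(h) = (s(2h-1)+1)/2`. -/
def idx (s h : ℕ) : ℕ := (s * (2 * h - 1) + 1) / 2



/-- Key geometric-sum identity: `∑_{r<n} cos(r q π / n)` equals `n`, `0`, or `1`. -/
lemma sum_cos_key (n : ℕ) (q : ℤ) (hn : 1 ≤ n) (hq : q.natAbs < 2 * n) :
    ∑ r ∈ Finset.range n, Real.cos (r * ((q : ℝ) * Real.pi / n)) =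
      if q = 0 then (n : ℝ) else if Even q then 0 else 1 := by
  rcases eq_or_ne q 0 with rfl | hq0
  · simp
  rw [if_neg hq0]
  set θ : ℝ := (q : ℝ) * Real.pi / n with hθ
  set z : ℂ := Complex.exp (θ * Complex.I) with hz
  have hzr : ∀ r : ℕ, Real.cos (r * θ) = (z ^ r).re := by
    intro r
    rw [hz, ← Complex.exp_nat_mul, ← Complex.exp_ofReal_mul_I_re]
    push_cast
    ring_nf
  have hn0 : (n : ℝ) ≠ 0 := Nat.cast_ne_zero.mpr (by omega)
  have hz1 : z ≠ 1 := by
    intro h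
    rw [hz, Complex.exp_eq_one_iff] at h
    obtain ⟨k, hk⟩ := h
    have hC : (θ : ℂ) = k * (2 * Real.pi) := by
      have h2 : (θ : ℂ) * Complex.I = ((k : ℂ) * (2 * Real.pi)) * Complex.I := by
        rw [hk]; ring
      exact mul_right_cancel₀ Complex.I_ne_zero h2
    have hθ' : θ = k * (2 * Real.pi) := by exact_mod_cast hC
    rw [hθ, div_eq_iff hn0] at hθ'
    have hQ : (q : ℝ) = 2 * n * k := by
      have h2 : (q : ℝ) * Real.pi = (2 * (n : ℝ) * k) * Real.pi := by
        linear_combination hθ'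
      exact mul_right_cancel₀ Real.pi_ne_zero h2
    have hqe : q = 2 * n * k := by exact_mod_cast hQ
    rcases eq_or_ne k 0 with rfl | hk0
    · simp [hqe] at hq0
    · have h1 : q.natAbs = 2 * n * k.natAbs := by
        rw [hqe, Int.natAbs_mul, Int.natAbs_mul]; simp
      have h2 : 1 ≤ k.natAbs := Int.natAbs_pos.mpr hk0
      have h3 : 2 * n * 1 ≤ 2 * n * k.natAbs := Nat.mul_le_mul_left _ h2
      omega
  have hzn : z ^ n = (-1 : ℂ) ^ q := by
    rw [hz, ← Complex.exp_nat_mul, ← Complex.exp_pi_mul_I, ← Complex.exp_int_mul]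
    congr 1
    have hnc : (n : ℂ) ≠ 0 := by exact_mod_cast hn0
    rw [hθ]
    push_cast
    field_simp
  have hsum : (∑ r ∈ Finset.range n, (z : ℂ) ^ r) = (z ^ n - 1) / (z - 1) :=
    geom_sum_eq hz1 n
  have hre : ∑ r ∈ Finset.range n, Real.cos (r * θ) =
      ((z ^ n - 1) / (z - 1)).re := by
    rw [← hsum, Complex.re_sum]
    exact Finset.sum_congr rfl fun r _ => hzr r
  rcases Int.even_or_odd q with he | ho
  · rw [if_pos he, hre]
    have : (-1 : ℂ) ^ q = 1 := he.neg_one_zpow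
    rw [hzn, this]
    simp
  · rw [if_neg (Int.not_even_iff_odd.mpr ho), hre]
    have hm1 : (-1 : ℂ) ^ q = -1 := ho.neg_one_zpow
    rw [hzn, hm1]
    set w : ℂ := (-1 - 1) / (z - 1) with hw
    have hz0 : z ≠ 0 := Complex.exp_ne_zero _
    have hconj : (starRingEnd ℂ) z = z⁻¹ := by
      rw [hz, ← Complex.exp_conj, ← Complex.exp_neg]
      congr 1
      simp [Complex.conj_I]
    have hzi1 : z⁻¹ ≠ 1 := by
      intro h
      apply hz1
      field_simp at h
      exact h.symm
    have hzm1 : z - 1 ≠ 0 := sub_ne_zero.mpr hz1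
    have hzim1 : z⁻¹ - 1 ≠ 0 := sub_ne_zero.mpr hzi1
    have key : w + (starRingEnd ℂ) w = 2 := by
      rw [hw, map_div₀, map_sub, map_sub, hconj]
      simp only [map_neg, map_one]
      rw [div_add_div _ _ hzm1 hzim1, div_eq_iff (mul_ne_zero hzm1 hzim1)]
      field_simp
      ring
    have := Complex.add_conj w
    rw [key] at this
    have : (2 : ℝ) = 2 * w.re := by exact_mod_cast this
    linarith

/-- Chebyshev node angle data. -/
lemma tnode_range (n j : ℕ) (hj1 : 1 ≤ j) (hj2 : j ≤ n) :
    0 ≤ tnode n j ∧ tnode n j ≤ Real.pi := by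
  have hn : (0:ℝ) < n := by exact_mod_cast Nat.lt_of_lt_of_le Nat.zero_lt_one (le_trans hj1 hj2)
  have hjr : (1:ℝ) ≤ (j:ℝ) := by exact_mod_cast hj1
  have hjn : (j:ℝ) ≤ n := by exact_mod_cast hj2
  constructor
  · apply div_nonneg _ (by linarith)
    have := Real.pi_pos
    nlinarith
  · rw [tnode, div_le_iff₀ (by linarith)]
    have := Real.pi_pos
    nlinarith

lemma arccos_xnode (n j : ℕ) (hj1 : 1 ≤ j) (hj2 : j ≤ n) :
    Real.arccos (xnode n j) = tnode n j := by
  obtain ⟨h0, h1⟩ := tnode_range n j hj1 hj2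
  exact Real.arccos_cos h0 h1

lemma qVP_node (n m r j : ℕ) (hm : m < n) (hr : r ≤ n - 1)
    (hj1 : 1 ≤ j) (hj2 : j ≤ n) :
    qVP n m r (xnode n j) = Real.cos (r * tnode n j) := by
  rw [qVP, arccos_xnode n j hj1 hj2]
  by_cases hcase : r ≤ n - m
  · rw [if_pos hcase]
  · rw [if_neg hcase]
    have hm1 : 1 ≤ m := by omega
    have hmr : (m:ℝ) ≠ 0 := by exact_mod_cast (by omega : m ≠ 0)
    have hn0 : (n:ℝ) ≠ 0 := by exact_mod_cast (by omega : n ≠ 0)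
    have hflip : Real.cos ((2 * (n:ℝ) - r) * tnode n j) = - Real.cos (r * tnode n j) := by
      have harg : (2 * (n:ℝ) - r) * tnode n j
          = (Real.pi - (r * tnode n j)) + (((j:ℤ) - 1 : ℤ) : ℝ) * (2 * Real.pi) := by
        rw [tnode]
        push_cast
        field_simp
        ring
      rw [harg, Real.cos_add_int_mul_two_pi, Real.cos_pi_sub]
    rw [hflip]
    field_simp
    ring

/-- Interpolation property: `Φ_{m,k}^n (x_j^n) = δ_{kj}`. -/
lemma phiVP_node (n m k j : ℕ) (hm : m < n) (hk1 : 1 ≤ k) (hk2 : k ≤ n)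
    (hj1 : 1 ≤ j) (hj2 : j ≤ n) :
    phiVP n m k (xnode n j) = if k = j then 1 else 0 := by
  have hn1 : 1 ≤ n := le_trans hj1 hj2
  have hn0 : (n:ℝ) ≠ 0 := by exact_mod_cast (by omega : n ≠ 0)
  rw [phiVP]
  have hq : ∀ r ∈ Finset.Icc 1 (n-1),
      Real.cos (r * tnode n k) * qVP n m r (xnode n j)
        = Real.cos (r * tnode n k) * Real.cos (r * tnode n j) := by
    intro r hr
    rw [Finset.mem_Icc] at hr
    rw [qVP_node n m r j hm hr.2 hj1 hj2]
  rw [Finset.sum_congr rfl hq]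
  set q₁ : ℤ := (k:ℤ) - j with hq₁
  set q₂ : ℤ := (k:ℤ) + j - 1 with hq₂
  set A := ∑ r ∈ Finset.range n, Real.cos (r * ((q₁ : ℝ) * Real.pi / n)) with hA
  set B := ∑ r ∈ Finset.range n, Real.cos (r * ((q₂ : ℝ) * Real.pi / n)) with hB
  have hsplit : (1:ℝ)/2 + ∑ r ∈ Finset.Icc 1 (n-1),
      Real.cos (r * tnode n k) * Real.cos (r * tnode n j) = (A + B) / 2 - 1/2 := by
    have hterm : ∀ r : ℕ,
        Real.cos (r * ((q₁ : ℝ) * Real.pi / n)) + Real.cos (r * ((q₂ : ℝ) * Real.pi / n))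
          = 2 * (Real.cos (r * tnode n k) * Real.cos (r * tnode n j)) := by
      intro r
      have e₁ : (r:ℝ) * ((q₁ : ℝ) * Real.pi / n)
          = r * tnode n k - r * tnode n j := by
        rw [hq₁, tnode, tnode]; push_cast; field_simp; ring
      have e₂ : (r:ℝ) * ((q₂ : ℝ) * Real.pi / n)
          = r * tnode n k + r * tnode n j := by
        rw [hq₂, tnode, tnode]; push_cast; field_simp; ring
      rw [e₁, e₂, Real.cos_sub, Real.cos_add]
      ring
    have hAB : A + B = ∑ r ∈ Finset.range n,
        2 * (Real.cos (r * tnode n k) * Real.cos (r * tnode n j)) := by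
      rw [hA, hB, ← Finset.sum_add_distrib]
      exact Finset.sum_congr rfl fun r _ => hterm r
    have hrange : ∑ r ∈ Finset.range n,
        2 * (Real.cos (r * tnode n k) * Real.cos (r * tnode n j))
        = 2 + ∑ r ∈ Finset.Icc 1 (n-1),
            2 * (Real.cos (r * tnode n k) * Real.cos (r * tnode n j)) := by
      have : Finset.range n = insert 0 (Finset.Icc 1 (n-1)) := by
        ext x
        simp only [Finset.mem_range, Finset.mem_insert, Finset.mem_Icc]
        omega
      rw [this, Finset.sum_insert (by simp)]
      norm_num
    rw [hAB, hrange, ← Finset.mul_sum]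
    ring
  rw [hsplit]
  have habs₁ : q₁.natAbs < 2 * n := by omega
  have habs₂ : q₂.natAbs < 2 * n := by omega
  by_cases hkj : k = j
  · subst hkj
    have hA' : A = n := by
      rw [hA, sum_cos_key n q₁ hn1 habs₁, if_pos (by omega)]
    have hB' : B = 1 := by
      rw [hB, sum_cos_key n q₂ hn1 habs₂, if_neg (by omega)]
      rw [if_neg]
      rw [Int.even_iff]
      omega
    rw [if_pos rfl, hA', hB']
    field_simp
    ring
  · rw [if_neg hkj]
    have hq₁0 : q₁ ≠ 0 := by omega
    have hq₂0 : q₂ ≠ 0 := by omega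
    by_cases hpar : Even q₁
    · have hA' : A = 0 := by
        rw [hA, sum_cos_key n q₁ hn1 habs₁, if_neg hq₁0, if_pos hpar]
      have hB' : B = 1 := by
        rw [hB, sum_cos_key n q₂ hn1 habs₂, if_neg hq₂0, if_neg]
        rw [Int.even_iff] at hpar ⊢
        omega
      rw [hA', hB']
      ring
    · have hA' : A = 1 := by
        rw [hA, sum_cos_key n q₁ hn1 habs₁, if_neg hq₁0, if_neg hpar]
      have hB' : B = 0 := by
        rw [hB, sum_cos_key n q₂ hn1 habs₂, if_neg hq₂0, if_pos]
        rw [Int.even_iff] at hpar ⊢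
        omega
      rw [hA', hB']
      ring

lemma idx_double (s h ℓ : ℕ) (hℓ : 1 ≤ ℓ) (hs : s = 2 * ℓ - 1) (hh : 1 ≤ h) :
    2 * idx s h = s * (2 * h - 1) + 1 := by
  have hodd : s * (2 * h - 1) % 2 = 1 := by
    rw [Nat.mul_mod]
    have h1 : s % 2 = 1 := by omega
    have h2 : (2 * h - 1) % 2 = 1 := by omega
    rw [h1, h2]
  rw [idx]
  omega

lemma idx_bounds (s N h ℓ : ℕ) (hℓ : 1 ≤ ℓ) (hs : s = 2 * ℓ - 1)
    (hh1 : 1 ≤ h) (hh2 : h ≤ N) : 1 ≤ idx s h ∧ idx s h ≤ s * N := by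
  have hd := idx_double s h ℓ hℓ hs hh1
  have hmono : s * (2 * h - 1) ≤ s * (2 * N - 1) :=
    Nat.mul_le_mul_left s (by omega)
  have hup : s * (2 * N - 1) = 2 * (s * N) - s := by
    rw [Nat.mul_sub]
    ring_nf
  have hs1 : 1 ≤ s := by omega
  have hsN : s ≤ s * N := Nat.le_mul_of_pos_right s (by omega)
  omega

lemma xnode_nest (s N h ℓ : ℕ) (hℓ : 1 ≤ ℓ) (hs : s = 2 * ℓ - 1)
    (hN : 1 ≤ N) (hh1 : 1 ≤ h) (hh2 : h ≤ N) :
    xnode (s * N) (idx s h) = xnode N h := by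
  have hd := idx_double s h ℓ hℓ hs hh1
  have hs1 : 1 ≤ s := by omega
  rw [xnode, xnode]
  congr 1
  rw [tnode, tnode]
  have hNr : (N:ℝ) ≠ 0 := by exact_mod_cast (by omega : N ≠ 0)
  have hsr : (s:ℝ) ≠ 0 := by exact_mod_cast (by omega : s ≠ 0)
  have hcast : 2 * ((idx s h : ℝ)) - 1 = (s:ℝ) * (2 * h - 1) := by
    have : ((2 * idx s h : ℕ) : ℝ) = ((s * (2 * h - 1) + 1 : ℕ) : ℝ) := by
      exact_mod_cast congrArg (Nat.cast : ℕ → ℝ) hd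
    push_cast [Nat.cast_sub (by omega : 1 ≤ 2 * h)] at this
    linarith
  rw [Nat.cast_mul, hcast]
  field_simp

theorem VP_downscale_eq_subsample (ℓ s N₁ N₂ n₁ n₂ : ℕ) (hℓ : 1 ≤ ℓ)
    (hs : s = 2 * ℓ - 1) (hN₁ : 1 ≤ N₁) (hN₂ : 1 ≤ N₂)
    (hn₁ : n₁ = s * N₁) (hn₂ : n₂ = s * N₂)
    (m₁ m₂ : ℕ) (hm₁ : m₁ < n₁) (hm₂ : m₂ < n₂) (g : ℝ → ℝ → ℝ) :
    ∀ h₁ h₂, 1 ≤ h₁ → h₁ ≤ N₁ → 1 ≤ h₂ → h₂ ≤ N₂ →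
      VPop n₁ n₂ m₁ m₂ g (xnode N₁ h₁) (xnode N₂ h₂)
        = g (xnode n₁ (idx s h₁)) (xnode n₂ (idx s h₂)) := by
  intro h₁ h₂ hh₁1 hh₁2 hh₂1 hh₂2
  set j₁ := idx s h₁ with hj₁
  set j₂ := idx s h₂ with hj₂
  obtain ⟨hj₁1, hj₁2⟩ := idx_bounds s N₁ h₁ ℓ hℓ hs hh₁1 hh₁2
  rw [← hn₁] at hj₁2
  obtain ⟨hj₂1, hj₂2⟩ := idx_bounds s N₂ h₂ ℓ hℓ hs hh₂1 hh₂2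
  rw [← hn₂] at hj₂2
  have hx₁ : xnode N₁ h₁ = xnode n₁ j₁ := by
    rw [hn₁]; exact (xnode_nest s N₁ h₁ ℓ hℓ hs hN₁ hh₁1 hh₁2).symm
  have hx₂ : xnode N₂ h₂ = xnode n₂ j₂ := by
    rw [hn₂]; exact (xnode_nest s N₂ h₂ ℓ hℓ hs hN₂ hh₂1 hh₂2).symm
  rw [hx₁, hx₂, VPop]
  rw [Finset.sum_eq_single_of_mem j₁ (Finset.mem_Icc.mpr ⟨hj₁1, hj₁2⟩)]
  · rw [Finset.sum_eq_single_of_mem j₂ (Finset.mem_Icc.mpr ⟨hj₂1, hj₂2⟩)]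
    · rw [phiVP_node n₁ m₁ j₁ j₁ hm₁ hj₁1 hj₁2 hj₁1 hj₁2,
        phiVP_node n₂ m₂ j₂ j₂ hm₂ hj₂1 hj₂2 hj₂1 hj₂2, if_pos rfl, if_pos rfl]
      ring
    · intro v hv hvne
      rw [Finset.mem_Icc] at hv
      rw [phiVP_node n₂ m₂ v j₂ hm₂ hv.1 hv.2 hj₂1 hj₂2, if_neg hvne]
      ring
  · intro u hu hune
    rw [Finset.mem_Icc] at hu
    apply Finset.sum_eq_zero
    intro v hv
    rw [phiVP_node n₁ m₁ u j₁ hm₁ hu.1 hu.2 hj₁1 hj₁2, if_neg hune]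
    ring
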